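/- If G is a nuciferous graph, then for every vertex v, the nullity of the adjacency matrix of G − v is exactly 1. -/

import Mathlib

open Matrix SimpleGraph

/-- A simple graph is *nuciferous* if its 0-1 adjacency matrix is invertible,
all diagonal entries of the inverse are zero, and all off-diagonal entries of
the inverse are nonzero. -/
def Nuciferous {V : Type*} [Fintype V] [DecidableEq V] (G : SimpleGraph V)
    [DecidableRel G.Adj] : Prop :=
  IsUnit (G.adjMatrix ℝ) ∧ (∀ i, (G.adjMatrix ℝ)⁻¹ i i = 0) ∧
    ∀ i j, i ≠ j → (G.adjMatrix ℝ)⁻¹ i j ≠ 0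

theorem nuciferous_deleted_vertex_nullity_one {n : ℕ} (G : SimpleGraph (Fin (n + 1)))
    [DecidableRel G.Adj] (h : Nuciferous G) (v : Fin (n + 1)) :
    Module.finrank ℝ
      (LinearMap.ker (Matrix.mulVecLin
        ((G.adjMatrix ℝ).submatrix v.succAbove v.succAbove))) = 1 := by
  obtain ⟨hU, hdiag, hoff⟩ := h
  set A := G.adjMatrix ℝ with hA
  have hdet : IsUnit A.det := (isUnit_iff_isUnit_det A).mp hU
  have hAinv : A⁻¹ * A = 1 := nonsing_inv_mul A hdet
  have hAinv' : A * A⁻¹ = 1 := mul_nonsing_inv A hdet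
  rcases Nat.eq_zero_or_pos n with rfl | hn
  · exfalso
    have hz : A.det = 0 := by
      rw [det_fin_one, hA]
      simp
    rw [hz] at hdet
    simp at hdet
  -- the candidate kernel vector: restricted v-th column of A⁻¹
  set x0 : Fin n → ℝ := fun j => A⁻¹ (v.succAbove j) v with hx0
  have hx0ne : x0 ≠ 0 := by
    intro hzero
    exact hoff _ _ (Fin.succAbove_ne v ⟨0, hn⟩) (congrFun hzero ⟨0, hn⟩)
  have key : LinearMap.ker (Matrix.mulVecLin
      (A.submatrix v.succAbove v.succAbove)) = Submodule.span ℝ {x0} := by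
    apply le_antisymm
    · intro x hx
      have hx' : (A.submatrix v.succAbove v.succAbove).mulVec x = 0 := hx
      -- extend x by zero at v
      set y : Fin (n + 1) → ℝ := v.insertNth 0 x with hy
      have hmul : ∀ i : Fin n, A.mulVec y (v.succAbove i) = 0 := by
        intro i
        have hrow := congrFun hx' i
        have hsum : A.mulVec y (v.succAbove i)
            = ∑ k, A (v.succAbove i) k * y k := rfl
        rw [hsum, Fin.sum_univ_succAbove (fun k => A (v.succAbove i) k * y k) v]
        have h1 : y v = 0 := by rw [hy, Fin.insertNth_apply_same]
        have h2 : ∀ j : Fin n, y (v.succAbove j) = x j := fun j => by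
          rw [hy, Fin.insertNth_apply_succAbove]
        simp only [h1, mul_zero, zero_add]
        simpa [Matrix.mulVec, dotProduct, h2] using hrow
      set c := A.mulVec y v with hc
      have hy2 : A.mulVec y = c • (Pi.single v 1 : Fin (n + 1) → ℝ) := by
        funext k
        rcases eq_or_ne k v with rfl | hk
        · simp [hc]
        · obtain ⟨i, rfl⟩ := k.exists_succAbove_eq hk
          simp [hmul i, Pi.single_eq_of_ne (Fin.succAbove_ne v i)]
      have hy3 : y = c • fun k => A⁻¹ k v := by
        have h4 : A⁻¹.mulVec (A.mulVec y) = y := by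
          rw [Matrix.mulVec_mulVec, hAinv, Matrix.one_mulVec]
        rw [hy2] at h4
        rw [← h4, Matrix.mulVec_smul, Matrix.mulVec_single]
        simp
        rfl
      have hxc : x = c • x0 := by
        funext j
        have := congrFun hy3 (v.succAbove j)
        rw [hy] at this
        rw [Fin.insertNth_apply_succAbove] at this
        simpa [hx0] using this
      rw [hxc]
      exact Submodule.smul_mem _ c (Submodule.mem_span_singleton_self x0)
    · rw [Submodule.span_le, Set.singleton_subset_iff]
      -- x0 is in the kernel
      show (A.submatrix v.succAbove v.succAbove).mulVec x0 = 0
      funext i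
      have hfull : ∑ k, A (v.succAbove i) k * A⁻¹ k v = 0 := by
        have : (A * A⁻¹) (v.succAbove i) v = (1 : Matrix (Fin (n+1)) (Fin (n+1)) ℝ) (v.succAbove i) v := by
          rw [hAinv']
        rw [Matrix.one_apply_ne (Fin.succAbove_ne v i)] at this
        simpa [Matrix.mul_apply] using this
      have hsplit := Fin.sum_univ_succAbove (fun k => A (v.succAbove i) k * A⁻¹ k v) v
      rw [hfull, hdiag v, mul_zero, zero_add] at hsplit
      calc (A.submatrix v.succAbove v.succAbove).mulVec x0 i
          = ∑ j, A (v.succAbove i) (v.succAbove j) * A⁻¹ (v.succAbove j) v := rfl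
        _ = 0 := hsplit.symm
  rw [key]
  exact finrank_span_singleton hx0ne
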